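/- If |b_k^{(1)}| + |b_k^{(2)}| ≤ C·|k|^{−β} for all k ≠ 0, where C > 0 and β > 1/2, then the series defining X_i^{(j)} converges in L² and there exists a constant C₂ > 0, depending only on C, β, q and σ, such that E[(X_i^{(j)} − X_i^{(j),v})²] ≤ C₂·v^{−(2β−1)} for all i, for j = 1, 2 and for all integers v ≥ 1. -/

import Mathlib

open MeasureTheory Filter

lemma aux_integrable_mul {Ω : Type*} [MeasurableSpace Ω] {ℙ : Measure Ω} {f g : Ω → ℝ}
    (hf : MemLp f 2 ℙ) (hg : MemLp g 2 ℙ) : Integrable (fun ω => f ω * g ω) ℙ := by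
  refine Integrable.mono' ((hf.integrable_sq.add hg.integrable_sq).div_const 2)
    (hf.aestronglyMeasurable.mul hg.aestronglyMeasurable)
    (Filter.Eventually.of_forall fun ω => ?_)
  simp only [Pi.add_apply, Real.norm_eq_abs, abs_mul]
  nlinarith [sq_nonneg (|f ω| - |g ω|), sq_abs (f ω), sq_abs (g ω),
    abs_nonneg (f ω), abs_nonneg (g ω)]

lemma aux_corr {Ω : Type*} [MeasurableSpace Ω] {ℙ : Measure Ω} {f g : Ω → ℝ} {s : ℝ}
    (hf : MemLp f 2 ℙ) (hg : MemLp g 2 ℙ)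
    (hf2 : ∫ ω, f ω ^ 2 ∂ℙ ≤ s) (hg2 : ∫ ω, g ω ^ 2 ∂ℙ ≤ s) :
    |∫ ω, f ω * g ω ∂ℙ| ≤ s := by
  have h1 : |∫ ω, f ω * g ω ∂ℙ| ≤ ∫ ω, |f ω * g ω| ∂ℙ := by
    simpa only [Real.norm_eq_abs] using norm_integral_le_integral_norm (μ := ℙ) (fun ω => f ω * g ω)
  have h2 : ∫ ω, |f ω * g ω| ∂ℙ ≤ ∫ ω, (f ω ^ 2 + g ω ^ 2) / 2 ∂ℙ := by
    refine integral_mono (aux_integrable_mul hf hg).abs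
      ((hf.integrable_sq.add hg.integrable_sq).div_const 2) (fun ω => ?_)
    rw [abs_mul]
    nlinarith [sq_nonneg (|f ω| - |g ω|), sq_abs (f ω), sq_abs (g ω),
      abs_nonneg (f ω), abs_nonneg (g ω)]
  have h3 : ∫ ω, (f ω ^ 2 + g ω ^ 2) / 2 ∂ℙ ≤ s := by
    rw [integral_div, integral_add hf.integrable_sq hg.integrable_sq]
    linarith
  linarith

lemma aux_normSq {Ω : Type*} [MeasurableSpace Ω] {ℙ : Measure Ω} (h : Lp ℝ 2 ℙ) :
    ‖h‖ ^ 2 = ∫ ω, (h ω : ℝ) ^ 2 ∂ℙ := by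
  rw [← real_inner_self_eq_norm_sq, L2.inner_def]
  refine integral_congr_ae (Filter.Eventually.of_forall fun ω => ?_)
  simp [RCLike.inner_apply, sq]

lemma aux_tail_nat {β : ℝ} (hβ : 1 / 2 < β) (v w : ℕ) (hv : 1 ≤ v) :
    ∑ n ∈ Finset.Icc v w, ((n : ℝ)) ^ (-(2 * β)) ≤
      (1 + 1 / (2 * β - 1)) * (v : ℝ) ^ ((1 : ℝ) - 2 * β) := by
  have h2β : (0:ℝ) < 2 * β - 1 := by linarith
  have hv0 : (0:ℝ) < (v:ℝ) := by exact_mod_cast hv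
  have hv1 : (1:ℝ) ≤ (v:ℝ) := by exact_mod_cast hv
  have hvpow : (0:ℝ) ≤ (v : ℝ) ^ ((1:ℝ) - 2 * β) := Real.rpow_nonneg hv0.le _
  rcases lt_or_ge w v with hwv | hvw
  · rw [Finset.Icc_eq_empty (by omega)]
    simp only [Finset.sum_empty]
    positivity
  rw [← Finset.insert_Icc_add_one_left_eq_Icc hvw, Finset.sum_insert (by simp)]
  have htail : ∑ n ∈ Finset.Icc (v+1) w, ((n : ℝ)) ^ (-(2 * β)) ≤
      (v : ℝ) ^ ((1:ℝ) - 2 * β) / (2 * β - 1) := by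
    have hrw : ∑ n ∈ Finset.Icc (v+1) w, ((n : ℝ)) ^ (-(2 * β)) =
        ∑ i ∈ Finset.range (w - v), ((v : ℝ) + ((i + 1 : ℕ) : ℝ)) ^ (-(2 * β)) := by
      rw [← Finset.Ico_add_one_right_eq_Icc, Finset.sum_Ico_eq_sum_range]
      rw [show w + 1 - (v + 1) = w - v from by omega]
      refine Finset.sum_congr rfl fun i _ => ?_
      push_cast; ring_nf
    rw [hrw]
    have hanti : AntitoneOn (fun x : ℝ => x ^ (-(2 * β)))
        (Set.Icc (v : ℝ) ((v : ℝ) + ((w - v : ℕ) : ℝ))) := by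
      intro x hx y hy hxy
      exact Real.rpow_le_rpow_of_nonpos (lt_of_lt_of_le hv0 hx.1) hxy (by linarith)
    have hint := hanti.sum_le_integral
    have hval : ∫ x in (v:ℝ)..((v:ℝ) + ((w - v : ℕ) : ℝ)), x ^ (-(2 * β)) =
        (((v:ℝ) + ((w - v : ℕ) : ℝ)) ^ (-(2*β) + 1) - (v:ℝ) ^ (-(2*β) + 1)) / (-(2*β) + 1) := by
      refine integral_rpow (Or.inr ⟨by intro h; linarith, ?_⟩)
      intro h0
      rw [Set.mem_uIcc] at h0
      rcases h0 with ⟨h1, _⟩ | ⟨h1, _⟩ <;> nlinarith [Nat.cast_nonneg (α := ℝ) (w - v)]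
    have hbnd : (((v:ℝ) + ((w - v : ℕ) : ℝ)) ^ (-(2*β) + 1) - (v:ℝ) ^ (-(2*β) + 1)) / (-(2*β) + 1)
        ≤ (v : ℝ) ^ ((1:ℝ) - 2 * β) / (2 * β - 1) := by
      rw [show (-(2*β) + 1 : ℝ) = 1 - 2*β from by ring]
      have hA : (0:ℝ) ≤ ((v:ℝ) + ((w - v : ℕ) : ℝ)) ^ ((1:ℝ) - 2*β) :=
        Real.rpow_nonneg (by positivity) _
      rw [show (((v:ℝ) + ((w - v : ℕ) : ℝ)) ^ ((1:ℝ)-2*β) - (v:ℝ)^((1:ℝ)-2*β)) / ((1:ℝ)-2*β)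
          = ((v:ℝ)^((1:ℝ)-2*β) - (((v:ℝ) + ((w - v : ℕ) : ℝ)) ^ ((1:ℝ)-2*β))) / (2*β-1) from by
        rw [div_eq_div_iff (by linarith) (by linarith)]; ring]
      gcongr
      linarith
    calc _ ≤ _ := hint
      _ = _ := hval
      _ ≤ _ := hbnd
  have hhead : (v:ℝ) ^ (-(2 * β)) ≤ (v:ℝ) ^ ((1:ℝ) - 2 * β) :=
    Real.rpow_le_rpow_of_exponent_le hv1 (by linarith)
  have : (v : ℝ) ^ ((1:ℝ) - 2 * β) + (v : ℝ) ^ ((1:ℝ) - 2 * β) / (2 * β - 1) =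
      (1 + 1 / (2 * β - 1)) * (v : ℝ) ^ ((1 : ℝ) - 2 * β) := by ring
  linarith

lemma aux_tail_int {β : ℝ} (hβ : 1 / 2 < β) (u : ℕ) (hu : 1 ≤ u) (S : Finset ℤ)
    (hS : ∀ k ∈ S, (u : ℤ) ≤ |k|) :
    ∑ k ∈ S, |(k : ℝ)| ^ (-(2 * β)) ≤
      2 * ((1 + 1 / (2 * β - 1)) * (u : ℝ) ^ ((1 : ℝ) - 2 * β)) := by
  have habs : ∀ k : ℤ, |(k : ℝ)| = ((k.natAbs : ℕ) : ℝ) := by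
    intro k; rw [Nat.cast_natAbs]; push_cast; rfl
  have hrw : ∑ k ∈ S, |(k : ℝ)| ^ (-(2 * β)) =
      ∑ k ∈ S, (fun n : ℕ => ((n : ℝ)) ^ (-(2 * β))) (Int.natAbs k) := by
    refine Finset.sum_congr rfl fun k _ => by rw [habs]
  rw [hrw, Finset.sum_comp (fun n : ℕ => ((n:ℝ)) ^ (-(2*β))) Int.natAbs]
  have hsub : Finset.image Int.natAbs S ⊆ Finset.Icc u (S.sup Int.natAbs) := by
    intro n hn
    rw [Finset.mem_image] at hn
    obtain ⟨k, hk, rfl⟩ := hn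
    rw [Finset.mem_Icc]
    refine ⟨?_, Finset.le_sup hk⟩
    have := hS k hk
    rw [Int.abs_eq_natAbs] at this
    exact_mod_cast this
  calc ∑ n ∈ Finset.image Int.natAbs S,
        (Finset.filter (fun a => Int.natAbs a = n) S).card • ((n : ℝ)) ^ (-(2 * β))
      ≤ ∑ n ∈ Finset.image Int.natAbs S, 2 * ((n : ℝ)) ^ (-(2 * β)) := by
        refine Finset.sum_le_sum fun n _ => ?_
        rw [nsmul_eq_mul]
        have hcard : (Finset.filter (fun a => Int.natAbs a = n) S).card ≤ 2 := by
          have : Finset.filter (fun a => Int.natAbs a = n) S ⊆ {(n : ℤ), -(n : ℤ)} := by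
            intro k hk
            rw [Finset.mem_filter] at hk
            rcases Int.natAbs_eq k with h | h
            · rw [Finset.mem_insert]; left; rw [h, hk.2]
            · rw [Finset.mem_insert, Finset.mem_singleton]; right; rw [h, hk.2]
          calc _ ≤ ({(n : ℤ), -(n : ℤ)} : Finset ℤ).card := Finset.card_le_card this
            _ ≤ 2 := Finset.card_insert_le _ _ |>.trans (by simp)
        have hpow : (0:ℝ) ≤ ((n : ℝ)) ^ (-(2 * β)) := Real.rpow_nonneg (by positivity) _
        have : ((Finset.filter (fun a => Int.natAbs a = n) S).card : ℝ) ≤ 2 := by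
          exact_mod_cast hcard
        nlinarith
    _ ≤ ∑ n ∈ Finset.Icc u (S.sup Int.natAbs), 2 * ((n : ℝ)) ^ (-(2 * β)) := by
        refine Finset.sum_le_sum_of_subset_of_nonneg hsub fun n _ _ => ?_
        have : (0:ℝ) ≤ ((n : ℝ)) ^ (-(2 * β)) := Real.rpow_nonneg (by positivity) _
        linarith
    _ = 2 * ∑ n ∈ Finset.Icc u (S.sup Int.natAbs), ((n : ℝ)) ^ (-(2 * β)) := by
        rw [Finset.mul_sum]
    _ ≤ 2 * ((1 + 1 / (2 * β - 1)) * (u : ℝ) ^ ((1 : ℝ) - 2 * β)) := by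
        have := aux_tail_nat hβ u (S.sup Int.natAbs) hu
        linarith

lemma aux_var {Ω : Type*} [MeasurableSpace Ω] {ℙ : Measure Ω} [IsProbabilityMeasure ℙ]
    (e : ℤ → Ω → ℝ) (q : ℕ) (s : ℝ)
    (he : ∀ k, MemLp (e k) 2 ℙ)
    (hfar : ∀ a c : ℤ, (q : ℤ) < |a - c| → ∫ ω, e a ω * e c ω ∂ℙ = 0)
    (hnear : ∀ a c : ℤ, |∫ ω, e a ω * e c ω ∂ℙ| ≤ s)
    (c : ℤ → ℝ) (S : Finset ℤ) :
    ∫ ω, (∑ k ∈ S, c k * e k ω) ^ 2 ∂ℙ ≤ s * (2 * (q:ℝ) + 1) * ∑ k ∈ S, (c k) ^ 2 := by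
  have hs : 0 ≤ s := le_trans (abs_nonneg _) (hnear 0 0)
  have hint : ∀ k l : ℤ, Integrable (fun ω => (c k * c l) * (e k ω * e l ω)) ℙ :=
    fun k l => (aux_integrable_mul (he k) (he l)).const_mul _
  have hIeq : ∫ ω, (∑ k ∈ S, c k * e k ω) ^ 2 ∂ℙ =
      ∑ k ∈ S, ∑ l ∈ S, (c k * c l) * ∫ ω, e k ω * e l ω ∂ℙ := by
    have hexp : ∀ ω, (∑ k ∈ S, c k * e k ω) ^ 2 =
        ∑ k ∈ S, ∑ l ∈ S, (c k * c l) * (e k ω * e l ω) := by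
      intro ω
      rw [sq, Finset.sum_mul_sum]
      exact Finset.sum_congr rfl fun k _ =>
        Finset.sum_congr rfl fun l _ => by ring
    simp_rw [hexp]
    rw [integral_finset_sum S (fun k _ => integrable_finset_sum S (fun l _ => hint k l))]
    refine Finset.sum_congr rfl fun k _ => ?_
    rw [integral_finset_sum S (fun l _ => hint k l)]
    exact Finset.sum_congr rfl fun l _ => integral_const_mul _ _
  rw [hIeq]
  have hterm : ∀ k ∈ S, ∀ l ∈ S, (c k * c l) * ∫ ω, e k ω * e l ω ∂ℙ ≤
      (if |k - l| ≤ (q:ℤ) then s * (c k) ^ 2 / 2 else 0) +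
      (if |k - l| ≤ (q:ℤ) then s * (c l) ^ 2 / 2 else 0) := by
    intro k _ l _
    by_cases h : |k - l| ≤ (q:ℤ)
    · rw [if_pos h, if_pos h]
      have h1 : (c k * c l) * ∫ ω, e k ω * e l ω ∂ℙ ≤ |c k * c l| * s := by
        calc (c k * c l) * ∫ ω, e k ω * e l ω ∂ℙ ≤ |(c k * c l) * ∫ ω, e k ω * e l ω ∂ℙ| :=
            le_abs_self _
          _ = |c k * c l| * |∫ ω, e k ω * e l ω ∂ℙ| := abs_mul _ _
          _ ≤ |c k * c l| * s := mul_le_mul_of_nonneg_left (hnear k l) (abs_nonneg _)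
      refine h1.trans ?_
      rw [abs_mul]
      nlinarith [sq_nonneg (|c k| - |c l|), sq_abs (c k), sq_abs (c l),
        abs_nonneg (c k), abs_nonneg (c l)]
    · rw [if_neg h, if_neg h, hfar k l (not_le.mp h)]
      simp
  have hA : ∀ (d : ℤ → ℝ), (∀ k, 0 ≤ d k) →
      ∑ k ∈ S, ∑ l ∈ S, (if |k - l| ≤ (q:ℤ) then d k else 0) ≤
        ∑ k ∈ S, (2 * (q:ℝ) + 1) * d k := by
    intro d hd
    refine Finset.sum_le_sum fun k _ => ?_
    rw [← Finset.sum_filter, Finset.sum_const, nsmul_eq_mul]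
    have hcard : ((S.filter (fun l => |k - l| ≤ (q:ℤ))).card : ℝ) ≤ 2 * (q:ℝ) + 1 := by
      have h1 : (S.filter (fun l => |k - l| ≤ (q:ℤ))).card ≤ (Finset.Icc (k - q) (k + q)).card := by
        refine Finset.card_le_card fun l hl => ?_
        rw [Finset.mem_filter] at hl
        rw [Finset.mem_Icc]
        have := abs_le.mp hl.2
        omega
      have h2 : (Finset.Icc (k - (q:ℤ)) (k + q)).card = 2 * q + 1 := by
        rw [Int.card_Icc]
        omega
      rw [h2] at h1
      calc ((S.filter (fun l => |k - l| ≤ (q:ℤ))).card : ℝ) ≤ ((2 * q + 1 : ℕ) : ℝ) := by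
            exact_mod_cast h1
        _ = 2 * (q:ℝ) + 1 := by push_cast; ring
    exact mul_le_mul_of_nonneg_right hcard (hd k)
  calc ∑ k ∈ S, ∑ l ∈ S, (c k * c l) * ∫ ω, e k ω * e l ω ∂ℙ
      ≤ ∑ k ∈ S, ∑ l ∈ S, ((if |k - l| ≤ (q:ℤ) then s * (c k) ^ 2 / 2 else 0) +
          (if |k - l| ≤ (q:ℤ) then s * (c l) ^ 2 / 2 else 0)) :=
        Finset.sum_le_sum fun k hk => Finset.sum_le_sum fun l hl => hterm k hk l hl
    _ = (∑ k ∈ S, ∑ l ∈ S, (if |k - l| ≤ (q:ℤ) then s * (c k) ^ 2 / 2 else 0)) +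
        (∑ k ∈ S, ∑ l ∈ S, (if |k - l| ≤ (q:ℤ) then s * (c l) ^ 2 / 2 else 0)) := by
        rw [← Finset.sum_add_distrib]
        exact Finset.sum_congr rfl fun k _ => Finset.sum_add_distrib
    _ ≤ (∑ k ∈ S, (2 * (q:ℝ) + 1) * (s * (c k) ^ 2 / 2)) +
        (∑ l ∈ S, (2 * (q:ℝ) + 1) * (s * (c l) ^ 2 / 2)) := by
        refine add_le_add (hA _ fun k => by positivity) ?_
        have hcomm : ∑ k ∈ S, ∑ l ∈ S, (if |k - l| ≤ (q:ℤ) then s * (c l) ^ 2 / 2 else 0) =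
            ∑ l ∈ S, ∑ k ∈ S, (if |l - k| ≤ (q:ℤ) then s * (c l) ^ 2 / 2 else 0) := by
          rw [Finset.sum_comm]
          exact Finset.sum_congr rfl fun l _ => Finset.sum_congr rfl fun k _ => by
            rw [abs_sub_comm]
        rw [hcomm]
        exact hA _ fun k => by positivity
    _ = s * (2 * (q:ℝ) + 1) * ∑ k ∈ S, (c k) ^ 2 := by
        rw [← Finset.sum_add_distrib, Finset.mul_sum]
        exact Finset.sum_congr rfl fun k _ => by ring

/-- **Truncation error bound for linear processes with `q`-dependent innovations**
(Example 6, estimate (2.19)): if `|b_k^{(1)}| + |b_k^{(2)}| ≤ C |k|^{−β}` with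
`β > 1/2`, then the series defining `X_i^{(j)}` converges in `L²` and
`E[(X_i^{(j)} − X_i^{(j),v})²] ≤ C₂ v^{−(2β−1)}` with `C₂` depending only on
`C`, `β`, `q` and `σ`. -/
theorem linear_process_truncation_L2_bound
    (C β : ℝ) (q : ℕ) (σ : ℝ) (hC : 0 < C) (hβ : 1 / 2 < β) (hσ : 0 ≤ σ) :
    ∃ C₂ : ℝ, 0 < C₂ ∧
      ∀ (Ω : Type*) [MeasurableSpace Ω] (ℙ : Measure Ω) [IsProbabilityMeasure ℙ]
        (ε : Fin 2 → ℤ → Ω → ℝ),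
        (∀ j k, Measurable (ε j k)) →
        (∀ j k, MemLp (ε j k) 2 ℙ) →
        (∀ j k, ∫ ω, ε j k ω ∂ℙ = 0) →
        -- stationarity
        (∀ a : ℤ,
          Measure.map (fun ω => fun k : ℤ => (ε 0 (k + a) ω, ε 1 (k + a) ω)) ℙ =
            Measure.map (fun ω => fun k : ℤ => (ε 0 k ω, ε 1 k ω)) ℙ) →
        -- `q`-dependence
        (∀ a b' : ℤ, (q : ℤ) < b' - a →
          ProbabilityTheory.IndepFun
            (fun ω => fun k : {k : ℤ // k ≤ a} => (ε 0 k ω, ε 1 k ω))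
            (fun ω => fun k : {k : ℤ // b' ≤ k} => (ε 0 k ω, ε 1 k ω)) ℙ) →
        -- uniformly bounded second moments
        (∀ j k, ∫ ω, (ε j k ω) ^ 2 ∂ℙ ≤ σ ^ 2) →
        ∀ b : Fin 2 → ℤ → ℝ,
        -- polynomial decay of the coefficients
        (∀ k : ℤ, k ≠ 0 → |b 0 k| + |b 1 k| ≤ C * |(k : ℝ)| ^ (-β)) →
        ∃ X : Fin 2 → ℤ → Ω → ℝ,
          -- the series defining `X_i^{(j)}` converges in `L²`
          (∀ j (i : ℤ), Tendsto (fun v : ℕ =>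
              eLpNorm (fun ω => X j i ω -
                ∑ k ∈ Finset.Icc (-(v : ℤ)) (v : ℤ), b j k * ε j (i - k) ω) 2 ℙ)
            atTop (nhds 0)) ∧
          -- the truncation error bound, `X_i^{(j),v} = Σ_{|k|<v} b_k^{(j)} ε_{i−k}^{(j)}`
          ∀ j (i : ℤ) (v : ℕ), 1 ≤ v →
            ∫ ω, (X j i ω -
                ∑ k ∈ Finset.Ioo (-(v : ℤ)) (v : ℤ), b j k * ε j (i - k) ω) ^ 2 ∂ℙ ≤
              C₂ * (v : ℝ) ^ (-(2 * β - 1)) := by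
  have h2β : (0:ℝ) < 2 * β - 1 := by linarith
  have hK : (0:ℝ) < 1 + 1 / (2 * β - 1) := by
    have := one_div_pos.mpr h2β; linarith
  set D₀ : ℝ := C ^ 2 * (2 * (1 + 1 / (2 * β - 1))) with hD₀def
  have hD₀ : 0 ≤ D₀ := by positivity
  set D : ℝ := σ ^ 2 * (2 * (q:ℝ) + 1) * D₀ with hDdef
  have hD : 0 ≤ D := by positivity
  refine ⟨D + 1, by linarith, ?_⟩
  intro Ω _ ℙ _ ε hmeas hε2 hmean hstat hdep hσ2 b hb
  -- coefficient bounds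
  have hbsq : ∀ (j : Fin 2) (k : ℤ), k ≠ 0 → (b j k) ^ 2 ≤ C ^ 2 * |(k:ℝ)| ^ (-(2 * β)) := by
    intro j k hk
    have hk0 : (0:ℝ) < |(k:ℝ)| := by
      simp only [abs_pos]
      exact_mod_cast hk
    have h1 : |b j k| ≤ C * |(k:ℝ)| ^ (-β) := by
      have h2 := hb k hk
      fin_cases j
      · have := abs_nonneg (b 1 k); simpa using by linarith
      · have := abs_nonneg (b 0 k); simpa using by linarith
    have h3 : (b j k) ^ 2 ≤ (C * |(k:ℝ)| ^ (-β)) ^ 2 := by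
      rw [← sq_abs]
      exact pow_le_pow_left₀ (abs_nonneg _) h1 2
    refine h3.trans_eq ?_
    rw [mul_pow]
    congr 1
    rw [← Real.rpow_natCast (|(k:ℝ)| ^ (-β)) 2, ← Real.rpow_mul hk0.le]
    norm_num
    ring_nf
  have coefTail : ∀ (j : Fin 2) (u : ℕ), 1 ≤ u → ∀ S : Finset ℤ, (∀ k ∈ S, (u:ℤ) ≤ |k|) →
      ∑ k ∈ S, (b j k) ^ 2 ≤ D₀ * (u:ℝ) ^ ((1:ℝ) - 2 * β) := by
    intro j u hu S hS
    have h1 : ∑ k ∈ S, (b j k) ^ 2 ≤ ∑ k ∈ S, C ^ 2 * |(k:ℝ)| ^ (-(2 * β)) := by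
      refine Finset.sum_le_sum fun k hk => hbsq j k ?_
      have := hS k hk
      intro h; rw [h] at this; simp at this; omega
    have h2 := aux_tail_int hβ u hu S hS
    calc ∑ k ∈ S, (b j k) ^ 2 ≤ C ^ 2 * ∑ k ∈ S, |(k:ℝ)| ^ (-(2 * β)) := by
          rw [Finset.mul_sum]; exact h1
      _ ≤ C ^ 2 * (2 * ((1 + 1 / (2 * β - 1)) * (u : ℝ) ^ ((1 : ℝ) - 2 * β))) := by
          have hC2 : (0:ℝ) ≤ C ^ 2 := sq_nonneg C
          exact mul_le_mul_of_nonneg_left h2 hC2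
      _ = D₀ * (u:ℝ) ^ ((1:ℝ) - 2 * β) := by rw [hD₀def]; ring
  -- integrability
  have hInt : ∀ (j : Fin 2) (k : ℤ), Integrable (ε j k) ℙ := fun j k =>
    (hε2 j k).integrable one_le_two
  -- independence of far-apart innovations
  have indep : ∀ (j : Fin 2) (a c : ℤ), (q:ℤ) < c - a →
      ProbabilityTheory.IndepFun (ε j a) (ε j c) ℙ := by
    intro j a c h
    have H := hdep a c h
    fin_cases j
    · exact H.comp (φ := fun v : ({k : ℤ // k ≤ a} → ℝ × ℝ) => (v ⟨a, le_rfl⟩).1)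
        (ψ := fun v : ({k : ℤ // c ≤ k} → ℝ × ℝ) => (v ⟨c, le_rfl⟩).1)
        ((measurable_pi_apply _).fst) ((measurable_pi_apply _).fst)
    · exact H.comp (φ := fun v : ({k : ℤ // k ≤ a} → ℝ × ℝ) => (v ⟨a, le_rfl⟩).2)
        (ψ := fun v : ({k : ℤ // c ≤ k} → ℝ × ℝ) => (v ⟨c, le_rfl⟩).2)
        ((measurable_pi_apply _).snd) ((measurable_pi_apply _).snd)
  have hfar : ∀ (j : Fin 2) (a c : ℤ), (q:ℤ) < |a - c| →
      ∫ ω, ε j a ω * ε j c ω ∂ℙ = 0 := by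
    have key : ∀ (j : Fin 2) (a c : ℤ), (q:ℤ) < c - a → ∫ ω, ε j a ω * ε j c ω ∂ℙ = 0 := by
      intro j a c h'
      have h0 := (indep j a c h').integral_mul_eq_mul_integral (hInt j a).aestronglyMeasurable (hInt j c).aestronglyMeasurable
      rw [show (fun ω => ε j a ω * ε j c ω) = ε j a * ε j c from rfl] at *
      rw [h0, hmean, zero_mul]
    intro j a c h
    rcases le_or_gt a c with hac | hac
    · refine key j a c ?_
      rw [abs_of_nonpos (by omega)] at h
      omega
    · have := key j c a (by rw [abs_of_nonneg (by omega)] at h; omega)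
      rw [show (fun ω => ε j a ω * ε j c ω) = fun ω => ε j c ω * ε j a ω from
        funext fun ω => mul_comm _ _]
      exact this
  have hnear : ∀ (j : Fin 2) (a c : ℤ), |∫ ω, ε j a ω * ε j c ω ∂ℙ| ≤ σ ^ 2 := fun j a c =>
    aux_corr (hε2 j a) (hε2 j c) (hσ2 j a) (hσ2 j c)
  -- variance bound for weighted sums of innovations
  have tailVar : ∀ (j : Fin 2) (i : ℤ) (u : ℕ), 1 ≤ u → ∀ S : Finset ℤ,
      (∀ k ∈ S, (u:ℤ) ≤ |k|) →
      ∫ ω, (∑ k ∈ S, b j k * ε j (i - k) ω) ^ 2 ∂ℙ ≤ D * (u:ℝ) ^ ((1:ℝ) - 2 * β) := by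
    intro j i u hu S hS
    have h1 := aux_var (fun k => ε j (i - k)) q (σ ^ 2) (fun k => hε2 j (i - k))
      (fun a c h => hfar j (i - a) (i - c)
        (by rw [show i - a - (i - c) = -(a - c) from by ring, abs_neg]; exact h))
      (fun a c => hnear j (i - a) (i - c)) (b j) S
    have h2 := coefTail j u hu S hS
    calc ∫ ω, (∑ k ∈ S, b j k * ε j (i - k) ω) ^ 2 ∂ℙ
        ≤ σ ^ 2 * (2 * (q:ℝ) + 1) * ∑ k ∈ S, (b j k) ^ 2 := h1
      _ ≤ σ ^ 2 * (2 * (q:ℝ) + 1) * (D₀ * (u:ℝ) ^ ((1:ℝ) - 2 * β)) := by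
          refine mul_le_mul_of_nonneg_left h2 (by positivity)
      _ = D * (u:ℝ) ^ ((1:ℝ) - 2 * β) := by rw [hDdef]; ring
  -- the partial sums as elements of L²
  have memSum : ∀ (j : Fin 2) (i : ℤ) (S : Finset ℤ),
      MemLp (fun ω => ∑ k ∈ S, b j k * ε j (i - k) ω) 2 ℙ := by
    intro j i S
    have heq : (fun ω => ∑ k ∈ S, b j k * ε j (i - k) ω) =
        ∑ k ∈ S, (fun ω => b j k * ε j (i - k) ω) := by
      funext ω; simp [Finset.sum_apply]
    rw [heq]
    exact memLp_finset_sum' S fun k _ => (hε2 j (i - k)).const_mul _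
  set G : Fin 2 → ℤ → ℕ → Lp ℝ 2 ℙ :=
    fun j i v => (memSum j i (Finset.Icc (-(v:ℤ)) (v:ℤ))).toLp _ with hGdef
  -- distance bound between partial sums
  have hGdiff : ∀ (j : Fin 2) (i : ℤ) (v w : ℕ), v ≤ w →
      dist (G j i w) (G j i v) ^ 2 ≤ D * ((v:ℝ) + 1) ^ ((1:ℝ) - 2 * β) := by
    intro j i v w hvw
    have hsub : Finset.Icc (-(v:ℤ)) (v:ℤ) ⊆ Finset.Icc (-(w:ℤ)) (w:ℤ) := by
      intro k hk
      rw [Finset.mem_Icc] at *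
      have : (v:ℤ) ≤ (w:ℤ) := by exact_mod_cast hvw
      omega
    have hae : (↑↑(G j i w - G j i v) : Ω → ℝ) =ᵐ[ℙ] fun ω =>
        ∑ k ∈ Finset.Icc (-(w:ℤ)) (w:ℤ) \ Finset.Icc (-(v:ℤ)) (v:ℤ), b j k * ε j (i - k) ω := by
      filter_upwards [Lp.coeFn_sub (G j i w) (G j i v),
        (memSum j i (Finset.Icc (-(w:ℤ)) (w:ℤ))).coeFn_toLp,
        (memSum j i (Finset.Icc (-(v:ℤ)) (v:ℤ))).coeFn_toLp] with ω h1 h2 h3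
      rw [h1, Pi.sub_apply, hGdef]
      rw [h2, h3, Finset.sum_sdiff_eq_sub hsub]
    have heq : dist (G j i w) (G j i v) ^ 2 = ∫ ω,
        (∑ k ∈ Finset.Icc (-(w:ℤ)) (w:ℤ) \ Finset.Icc (-(v:ℤ)) (v:ℤ),
          b j k * ε j (i - k) ω) ^ 2 ∂ℙ := by
      rw [dist_eq_norm, aux_normSq (G j i w - G j i v)]
      exact integral_congr_ae (hae.mono fun ω h => by
        show _ ^ 2 = _ ^ 2
        rw [h])
    rw [heq]
    refine (tailVar j i (v + 1) (by omega) _ (fun k hk => ?_)).trans_eq (by push_cast; ring_nf)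
    rw [Finset.mem_sdiff, Finset.mem_Icc, Finset.mem_Icc] at hk
    rcases le_or_gt 0 k with h0 | h0
    · rw [abs_of_nonneg h0]; push_cast; omega
    · rw [abs_of_neg h0]; push_cast; omega
  -- existence of the L² limit
  have hL : ∀ (j : Fin 2) (i : ℤ), ∃ L : Lp ℝ 2 ℙ,
      Tendsto (fun v => G j i v) atTop (nhds L) := by
    intro j i
    refine cauchySeq_tendsto_of_complete ?_
    refine cauchySeq_of_le_tendsto_0
      (fun N => Real.sqrt (D * ((N:ℝ) + 1) ^ ((1:ℝ) - 2 * β))) ?_ ?_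
    · intro n m N hn hm
      have key : ∀ n m : ℕ, N ≤ m → m ≤ n →
          dist (G j i n) (G j i m) ≤ Real.sqrt (D * ((N:ℝ) + 1) ^ ((1:ℝ) - 2 * β)) := by
        intro n m hNm hmn
        have h1 := hGdiff j i m n hmn
        have h2 : D * ((m:ℝ) + 1) ^ ((1:ℝ) - 2 * β) ≤ D * ((N:ℝ) + 1) ^ ((1:ℝ) - 2 * β) := by
          refine mul_le_mul_of_nonneg_left ?_ hD
          refine Real.rpow_le_rpow_of_nonpos (by positivity) ?_ (by linarith)
          have : (N:ℝ) ≤ (m:ℝ) := by exact_mod_cast hNm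
          linarith
        have h3 : dist (G j i n) (G j i m) ^ 2 ≤ D * ((N:ℝ) + 1) ^ ((1:ℝ) - 2 * β) :=
          h1.trans h2
        calc dist (G j i n) (G j i m) = Real.sqrt (dist (G j i n) (G j i m) ^ 2) :=
            (Real.sqrt_sq dist_nonneg).symm
          _ ≤ Real.sqrt (D * ((N:ℝ) + 1) ^ ((1:ℝ) - 2 * β)) := Real.sqrt_le_sqrt h3
      rcases le_total m n with h | h
      · exact key n m hm h
      · rw [dist_comm]; exact key m n hn h
    · have h1 : Tendsto (fun N : ℕ => ((N:ℝ) + 1)) atTop atTop :=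
        tendsto_atTop_add_const_right atTop 1 tendsto_natCast_atTop_atTop
      have h2 : Tendsto (fun x : ℝ => x ^ ((1:ℝ) - 2 * β)) atTop (nhds 0) := by
        rw [show (1:ℝ) - 2 * β = -(2 * β - 1) from by ring]
        exact tendsto_rpow_neg_atTop h2β
      have h3 : Tendsto (fun N : ℕ => D * ((N:ℝ) + 1) ^ ((1:ℝ) - 2 * β)) atTop (nhds 0) := by
        simpa using (h2.comp h1).const_mul D
      have h4 := (Real.continuous_sqrt.tendsto 0).comp h3
      simpa [Function.comp_def] using h4
  choose L hLt using hL
  -- distance from the limit to the partial sums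
  have hdistL : ∀ (j : Fin 2) (i : ℤ) (v : ℕ),
      dist (L j i) (G j i v) ^ 2 ≤ D * ((v:ℝ) + 1) ^ ((1:ℝ) - 2 * β) := by
    intro j i v
    have hBpos : (0:ℝ) ≤ D * ((v:ℝ) + 1) ^ ((1:ℝ) - 2 * β) := by
      have := Real.rpow_nonneg (show (0:ℝ) ≤ (v:ℝ) + 1 from by positivity) ((1:ℝ) - 2 * β)
      exact mul_nonneg hD this
    have h2 : Tendsto (fun w => dist (G j i w) (G j i v)) atTop
        (nhds (dist (L j i) (G j i v))) := (hLt j i).dist tendsto_const_nhds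
    have h3 : dist (L j i) (G j i v) ≤ Real.sqrt (D * ((v:ℝ) + 1) ^ ((1:ℝ) - 2 * β)) := by
      refine le_of_tendsto h2 (eventually_atTop.2 ⟨v, fun w hw => ?_⟩)
      calc dist (G j i w) (G j i v) = Real.sqrt (dist (G j i w) (G j i v) ^ 2) :=
          (Real.sqrt_sq dist_nonneg).symm
        _ ≤ Real.sqrt (D * ((v:ℝ) + 1) ^ ((1:ℝ) - 2 * β)) :=
          Real.sqrt_le_sqrt (hGdiff j i v w hw)
    have h4 := pow_le_pow_left₀ dist_nonneg h3 2
    rwa [Real.sq_sqrt hBpos] at h4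
  refine ⟨fun j i => (↑↑(L j i) : Ω → ℝ), ?_, ?_⟩
  · -- L² convergence of the series
    intro j i
    have heq : ∀ v : ℕ, eLpNorm (fun ω => (↑↑(L j i) : Ω → ℝ) ω -
        ∑ k ∈ Finset.Icc (-(v : ℤ)) (v : ℤ), b j k * ε j (i - k) ω) 2 ℙ =
        ENNReal.ofReal (dist (L j i) (G j i v)) := by
      intro v
      have hae : (fun ω => (↑↑(L j i) : Ω → ℝ) ω -
          ∑ k ∈ Finset.Icc (-(v : ℤ)) (v : ℤ), b j k * ε j (i - k) ω) =ᵐ[ℙ]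
          (↑↑(L j i - G j i v) : Ω → ℝ) := by
        filter_upwards [Lp.coeFn_sub (L j i) (G j i v),
          (memSum j i (Finset.Icc (-(v:ℤ)) (v:ℤ))).coeFn_toLp] with ω h1 h2
        rw [h1, Pi.sub_apply, hGdef, h2]
      rw [eLpNorm_congr_ae hae, dist_eq_norm, Lp.norm_def,
        ENNReal.ofReal_toReal (Lp.eLpNorm_ne_top _)]
    have hd0 : Tendsto (fun v => dist (L j i) (G j i v)) atTop (nhds 0) := by
      have := (tendsto_const_nhds (x := L j i) (f := atTop)).dist (hLt j i)
      simpa using this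
    have := (ENNReal.continuous_ofReal.tendsto 0).comp hd0
    simp only [Function.comp_def] at this
    refine Tendsto.congr (fun v => (heq v).symm) ?_
    simpa using this
  · -- truncation error bound
    intro j i v hv
    have hcast : ((v - 1 : ℕ) : ℤ) = (v : ℤ) - 1 := by omega
    have hIoo : Finset.Ioo (-(v:ℤ)) (v:ℤ) =
        Finset.Icc (-((v - 1 : ℕ) : ℤ)) ((v - 1 : ℕ) : ℤ) := by
      ext k
      rw [Finset.mem_Ioo, Finset.mem_Icc, hcast]
      omega
    rw [hIoo]
    have hae : (fun ω => (↑↑(L j i) : Ω → ℝ) ω -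
        ∑ k ∈ Finset.Icc (-((v - 1 : ℕ) : ℤ)) ((v - 1 : ℕ) : ℤ), b j k * ε j (i - k) ω) =ᵐ[ℙ]
        (↑↑(L j i - G j i (v - 1)) : Ω → ℝ) := by
      filter_upwards [Lp.coeFn_sub (L j i) (G j i (v - 1)),
        (memSum j i (Finset.Icc (-((v - 1 : ℕ):ℤ)) ((v - 1 : ℕ):ℤ))).coeFn_toLp] with ω h1 h2
      rw [h1, Pi.sub_apply, hGdef, h2]
    have hIeq : ∫ ω, ((↑↑(L j i) : Ω → ℝ) ω -
        ∑ k ∈ Finset.Icc (-((v - 1 : ℕ) : ℤ)) ((v - 1 : ℕ) : ℤ), b j k * ε j (i - k) ω) ^ 2 ∂ℙ =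
        dist (L j i) (G j i (v - 1)) ^ 2 := by
      rw [dist_eq_norm, aux_normSq (L j i - G j i (v - 1))]
      exact integral_congr_ae (hae.mono fun ω h => congrArg (fun x => x ^ 2) h)
    rw [hIeq]
    have h1 := hdistL j i (v - 1)
    have hv1 : ((v - 1 : ℕ) : ℝ) + 1 = (v : ℝ) := by
      have : ((v - 1 : ℕ) : ℝ) = (v : ℝ) - 1 := by
        rw [Nat.cast_sub hv]; norm_num
      rw [this]; ring
    rw [hv1] at h1
    have hvpow : (0:ℝ) ≤ (v:ℝ) ^ ((1:ℝ) - 2 * β) :=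
      Real.rpow_nonneg (by positivity) _
    calc dist (L j i) (G j i (v - 1)) ^ 2 ≤ D * (v:ℝ) ^ ((1:ℝ) - 2 * β) := h1
      _ ≤ (D + 1) * (v:ℝ) ^ ((1:ℝ) - 2 * β) := by nlinarith
      _ = (D + 1) * (v:ℝ) ^ (-(2 * β - 1)) := by ring_nf
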